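/- arXiv:2306.13189 — 2 statements merged into one kernel-verified Lean document; each statement's English description precedes it below -/
import Mathlib

section
/- Under the stated assumptions on V, for every j ∈ ℤ and every r = 1, …, p the auxiliary variables satisfy the recursion iω Φ̂^{(r)}_j = (ṽ_{j−r+2} − ṽ_{j−r})/(2h) + (σ_j Φ̂^{(r)}_j + σ_{j−1} Φ̂^{(r)}_{j−1})/2 + Σ_{ℓ=1}^{r−1} (σ_{j−1−ℓ} Φ̂^{(r−ℓ)}_{j−1−ℓ} − σ_{j+1−ℓ} Φ̂^{(r−ℓ)}_{j+1−ℓ})/2. -/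
/-- The discrete complex stretching grid
`Z_{j,k} = (j+k)h + i(h/ω) Σ_{ℓ=0}^{k-1} σ_ℓ` (the sum being 0 for `k ≤ 0`). -/
noncomputable def Zmap (h ω : ℝ) (σ : ℤ → ℝ) (j k : ℤ) : ℂ :=
  ((j + k : ℤ) : ℂ) * (h : ℂ) +
    Complex.I * ((h : ℂ) / (ω : ℂ)) * ∑ l ∈ Finset.range k.toNat, ((σ l : ℝ) : ℂ)

/-- Discrete holomorphicity with respect to the grid `Zmap h ω σ`: the discrete
Cauchy–Riemann equations hold on every face. -/
def DiscreteHolo (h ω : ℝ) (σ : ℤ → ℝ) (F : ℤ → ℤ → ℂ) : Prop :=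
  ∀ j k : ℤ,
    (F (j + 1) (k + 1) - F j k) * (Zmap h ω σ j (k + 1) - Zmap h ω σ (j + 1) k) =
    (F j (k + 1) - F (j + 1) k) * (Zmap h ω σ (j + 1) (k + 1) - Zmap h ω σ j k)

/-- The auxiliary variable `Φ̂^{(r)}_j = (V_{−r+1,j+1} − V_{−r,j}) / (iω(2h + iσ_j h/ω))`. -/
noncomputable def PhiAux (h ω : ℝ) (σ : ℤ → ℝ) (V : ℤ → ℤ → ℂ) (r j : ℤ) : ℂ :=
  (V (-r + 1) (j + 1) - V (-r) j) /
    (Complex.I * (ω : ℂ) * (2 * (h : ℂ) + Complex.I * (σ j : ℂ) * (h : ℂ) / (ω : ℂ)))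

/-- The auxiliary variable `Ψ̂^{(r)}_j = (V_{r,j} − V_{r−1,j−1}) / (iω(2h + iσ_{j−1} h/ω))`. -/
noncomputable def PsiAux (h ω : ℝ) (σ : ℤ → ℝ) (V : ℤ → ℤ → ℂ) (r j : ℤ) : ℂ :=
  (V r j - V (r - 1) (j - 1)) /
    (Complex.I * (ω : ℂ) * (2 * (h : ℂ) + Complex.I * (σ (j - 1) : ℂ) * (h : ℂ) / (ω : ℂ)))


section Stmt14Helpers

lemma stmt14_sum_step (σ : ℤ → ℝ) (hσneg : ∀ j : ℤ, j < 0 → σ j = 0) (k : ℤ) :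
    ∑ l ∈ Finset.range (k+1).toNat, ((σ l : ℝ) : ℂ) =
      (∑ l ∈ Finset.range k.toNat, ((σ l : ℝ) : ℂ)) + (σ k : ℂ) := by
  rcases le_or_gt 0 k with hk | hk
  · have : (k+1).toNat = k.toNat + 1 := by omega
    rw [this, Finset.sum_range_succ, Int.toNat_of_nonneg hk]
  · have h1 : (k+1).toNat = 0 := by omega
    have h2 : k.toNat = 0 := by omega
    simp [h1, h2, hσneg k hk]

lemma stmt14_Zdiff1 (h ω : ℝ) (σ : ℤ → ℝ) (hσneg : ∀ j : ℤ, j < 0 → σ j = 0) (j k : ℤ) :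
    Zmap h ω σ (j+1) (k+1) - Zmap h ω σ j k
      = 2*(h:ℂ) + Complex.I * (σ k : ℂ) * (h:ℂ) / (ω:ℂ) := by
  unfold Zmap
  rw [stmt14_sum_step σ hσneg k]
  push_cast
  ring

lemma stmt14_Zdiff2 (h ω : ℝ) (σ : ℤ → ℝ) (hσneg : ∀ j : ℤ, j < 0 → σ j = 0) (j k : ℤ) :
    Zmap h ω σ j (k+1) - Zmap h ω σ (j+1) k
      = Complex.I * (σ k : ℂ) * (h:ℂ) / (ω:ℂ) := by
  unfold Zmap
  rw [stmt14_sum_step σ hσneg k]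
  push_cast
  ring

lemma stmt14_denom_ne (h ω s : ℝ) (hh : h ≠ 0) :
    (2*(h:ℂ) + Complex.I * (s:ℂ) * (h:ℂ) / (ω:ℂ)) ≠ 0 := by
  intro hc
  have := congrArg Complex.re hc
  simp [Complex.div_re, Complex.add_re, Complex.mul_re] at this
  exact hh this

lemma stmt14_telescope (g : ℤ → ℂ) (r : ℤ) (hr : 1 ≤ r) :
    ∑ l ∈ Finset.Icc (1:ℤ) (r-1), (g l - g (l+1)) = g 1 - g r := by
  obtain ⟨n, rfl⟩ : ∃ n : ℕ, r = 1 + n := ⟨(r-1).toNat, by omega⟩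
  induction n with
  | zero => simp
  | succ m ih =>
    have e1 : (1:ℤ) + ((m+1 : ℕ):ℤ) - 1 = (m:ℤ) + 1 := by push_cast; ring
    have hins : Finset.Icc (1:ℤ) ((m:ℤ)+1) =
        insert ((m:ℤ)+1) (Finset.Icc (1:ℤ) (1 + (m:ℤ) - 1)) := by
      ext x; simp; omega
    rw [e1, hins, Finset.sum_insert (by simp), ih (by omega)]
    have e2 : (1:ℤ) + ((m+1 : ℕ):ℤ) = ((m:ℤ)+1) + 1 := by push_cast; ring
    rw [e2]; ring_nf

lemma stmt14_K2 (h ω : ℝ) (hh : h ≠ 0) (hω : ω ≠ 0) (σ : ℤ → ℝ) (V : ℤ → ℤ → ℂ)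
    (s k : ℤ)
    (holo : (V (-s+1) (k+1) - V (-s) k) * (Complex.I * (σ k : ℂ) * h / ω) =
      (V (-s) (k+1) - V (-s+1) k) * (2*(h:ℂ) + Complex.I * (σ k : ℂ) * h / ω)) :
    (σ k : ℂ) * PhiAux h ω σ V s k = (V (-s+1) k - V (-s) (k+1)) / h := by
  have hd := stmt14_denom_ne h ω (σ k) hh
  have hωc : (ω:ℂ) ≠ 0 := Complex.ofReal_ne_zero.mpr hω
  have hhc : (h:ℂ) ≠ 0 := Complex.ofReal_ne_zero.mpr hh
  have hd' : (2*(h:ℂ)*ω + Complex.I * (σ k : ℂ) * h) ≠ 0 := by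
    intro hc
    apply hd
    field_simp at hc ⊢
    linear_combination hc
  have hq : ((ω:ℂ)*2 + Complex.I * (σ k : ℂ)) ≠ 0 := by
    intro hc; apply hd'; linear_combination (h:ℂ) * hc
  unfold PhiAux
  field_simp at holo ⊢
  linear_combination (-Complex.I) * holo +
    ((σ k : ℂ)*(V (-s+1) (k+1) - V (-s) k)) * Complex.I_sq

lemma stmt14_K1 (h ω : ℝ) (hh : h ≠ 0) (hω : ω ≠ 0) (σ : ℤ → ℝ) (V : ℤ → ℤ → ℂ)
    (s k : ℤ)
    (holo : (V (-s+1) (k+1) - V (-s) k) * (Complex.I * (σ k : ℂ) * h / ω) =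
      (V (-s) (k+1) - V (-s+1) k) * (2*(h:ℂ) + Complex.I * (σ k : ℂ) * h / ω)) :
    Complex.I * ω * PhiAux h ω σ V s k =
      (V (-s+1) (k+1) + V (-s+1) k - V (-s) (k+1) - V (-s) k) / (2*(h:ℂ)) := by
  have hd := stmt14_denom_ne h ω (σ k) hh
  have hωc : (ω:ℂ) ≠ 0 := Complex.ofReal_ne_zero.mpr hω
  have hhc : (h:ℂ) ≠ 0 := Complex.ofReal_ne_zero.mpr hh
  have hd' : (2*(h:ℂ)*ω + Complex.I * (σ k : ℂ) * h) ≠ 0 := by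
    intro hc
    apply hd
    field_simp at hc ⊢
    linear_combination hc
  have hq : ((ω:ℂ)*2 + Complex.I * (σ k : ℂ)) ≠ 0 := by
    intro hc; apply hd'; linear_combination (h:ℂ) * hc
  unfold PhiAux
  field_simp at holo ⊢
  linear_combination (-1:ℂ) * holo

end Stmt14Helpers

/-- the recursion for the auxiliary variables `Φ̂^{(r)}_j`,
where `ṽ_j = V_{0,j}`. -/
theorem stmt14
    (p : ℕ) (hp : 1 ≤ p) (h : ℝ) (hh : 0 < h)
    (a : ℤ → ℝ) (hsym : ∀ r : ℤ, a (-r) = a r)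
    (ω : ℝ) (hω : ω ≠ 0)
    (σ : ℤ → ℝ) (hσ : ∀ j : ℤ, 0 ≤ σ j) (hσneg : ∀ j : ℤ, j < 0 → σ j = 0)
    (V : ℤ → ℤ → ℂ) (hholo : DiscreteHolo h ω σ V)
    (heq : ∀ j k : ℤ, (∑ r ∈ Finset.Icc (-(p : ℤ)) (p : ℤ), (a r : ℂ) * V (j + r) k) +
        (ω : ℂ) ^ 2 * V j k = 0)
    (j : ℤ) (r : ℤ) (hr1 : 1 ≤ r) (hrp : r ≤ (p : ℤ)) :
    Complex.I * (ω : ℂ) * PhiAux h ω σ V r j =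
      (V 0 (j - r + 2) - V 0 (j - r)) / (2 * (h : ℂ)) +
      ((σ j : ℂ) * PhiAux h ω σ V r j + (σ (j - 1) : ℂ) * PhiAux h ω σ V r (j - 1)) / 2 +
      ∑ l ∈ Finset.Icc (1 : ℤ) (r - 1),
        ((σ (j - 1 - l) : ℂ) * PhiAux h ω σ V (r - l) (j - 1 - l) -
          (σ (j + 1 - l) : ℂ) * PhiAux h ω σ V (r - l) (j + 1 - l)) / 2 := by
  have hh' : h ≠ 0 := ne_of_gt hh
  have holo' : ∀ s k : ℤ,
      (V (-s+1) (k+1) - V (-s) k) * (Complex.I * (σ k : ℂ) * h / ω) =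
      (V (-s) (k+1) - V (-s+1) k) * (2*(h:ℂ) + Complex.I * (σ k : ℂ) * h / ω) := by
    intro s k
    have := hholo (-s) k
    rw [stmt14_Zdiff1 h ω σ hσneg, stmt14_Zdiff2 h ω σ hσneg] at this
    exact this
  have hK2 : ∀ s k : ℤ, (σ k : ℂ) * PhiAux h ω σ V s k = (V (-s+1) k - V (-s) (k+1)) / h :=
    fun s k => stmt14_K2 h ω hh' hω σ V s k (holo' s k)
  have hK1 : Complex.I * (ω:ℂ) * PhiAux h ω σ V r j =
      (V (-r+1) (j+1) + V (-r+1) j - V (-r) (j+1) - V (-r) j) / (2*(h:ℂ)) :=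
    stmt14_K1 h ω hh' hω σ V r j (holo' r j)
  set g : ℤ → ℂ := fun l => (V (l-r) (j+2-l) - V (l-r) (j-l))/(2*(h:ℂ)) with hg
  have hsum : ∑ l ∈ Finset.Icc (1 : ℤ) (r - 1),
        ((σ (j - 1 - l) : ℂ) * PhiAux h ω σ V (r - l) (j - 1 - l) -
          (σ (j + 1 - l) : ℂ) * PhiAux h ω σ V (r - l) (j + 1 - l)) / 2
      = ∑ l ∈ Finset.Icc (1 : ℤ) (r - 1), (g l - g (l+1)) := by
    refine Finset.sum_congr rfl (fun l hl => ?_)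
    rw [hK2 (r-l) (j-1-l), hK2 (r-l) (j+1-l), hg]
    simp only
    ring_nf
  rw [hK1, hK2 r j, hK2 r (j-1), hsum, stmt14_telescope g r hr1, hg]
  simp only
  field_simp
  ring_nf
end

section
/- Under the stated assumptions on V, for every j ∈ ℤ and every r = 1, …, p the auxiliary variables satisfy the recursion iω Ψ̂^{(r)}_j = (ṽ_{j+r} − ṽ_{j+r−2})/(2h) + (σ_{j−1} Ψ̂^{(r)}_j + σ_j Ψ̂^{(r)}_{j+1})/2 + Σ_{ℓ=1}^{r−1} (σ_{j+ℓ} Ψ̂^{(r−ℓ)}_{j+ℓ+1} − σ_{j+ℓ−2} Ψ̂^{(r−ℓ)}_{j+ℓ−1})/2. -/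
lemma sumdiff (σ : ℤ → ℝ) (hσneg : ∀ j : ℤ, j < 0 → σ j = 0) (k : ℤ) :
    (∑ l ∈ Finset.range (k+1).toNat, ((σ l : ℝ) : ℂ)) -
      ∑ l ∈ Finset.range k.toNat, ((σ l : ℝ) : ℂ) = ((σ k : ℝ) : ℂ) := by
  rcases le_or_gt 0 k with hk | hk
  · have h1 : (k+1).toNat = k.toNat + 1 := by omega
    rw [h1, Finset.sum_range_succ]
    have h2 : ((k.toNat : ℤ)) = k := Int.toNat_of_nonneg hk
    rw [h2]; ring
  · have h1 : (k+1).toNat = 0 := by omega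
    have h2 : k.toNat = 0 := by omega
    rw [h1, h2, hσneg k hk]; simp

lemma zd1 (h ω : ℝ) (σ : ℤ → ℝ) (hσneg : ∀ j : ℤ, j < 0 → σ j = 0) (j k : ℤ) :
    Zmap h ω σ j (k+1) - Zmap h ω σ (j+1) k
      = Complex.I * ((h:ℂ)/(ω:ℂ)) * ((σ k : ℝ) : ℂ) := by
  unfold Zmap
  have hs := sumdiff σ hσneg k
  push_cast
  linear_combination (Complex.I * ((h:ℂ)/(ω:ℂ))) * hs

lemma zd2 (h ω : ℝ) (σ : ℤ → ℝ) (hσneg : ∀ j : ℤ, j < 0 → σ j = 0) (j k : ℤ) :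
    Zmap h ω σ (j+1) (k+1) - Zmap h ω σ j k
      = 2*(h:ℂ) + Complex.I * ((h:ℂ)/(ω:ℂ)) * ((σ k : ℝ) : ℂ) := by
  unfold Zmap
  have hs := sumdiff σ hσneg k
  push_cast
  linear_combination (Complex.I * ((h:ℂ)/(ω:ℂ))) * hs

lemma Dval (h ω s : ℝ) (hω : (ω:ℂ) ≠ 0) :
    Complex.I * (ω:ℂ) * (2*(h:ℂ) + Complex.I*(s:ℂ)*(h:ℂ)/(ω:ℂ))
      = (2*Complex.I*(ω:ℂ) - (s:ℂ)) * (h:ℂ) := by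
  field_simp
  linear_combination ((s:ℂ)*(h:ℂ)) * Complex.I_mul_I

lemma Dne (h ω s : ℝ) (hh : h ≠ 0) (hω : ω ≠ 0) :
    (2*Complex.I*(ω:ℂ) - (s:ℂ)) * (h:ℂ) ≠ 0 := by
  apply mul_ne_zero
  · intro h0
    have := congrArg Complex.im h0
    simp at this
    exact hω (by linarith)
  · exact_mod_cast hh

lemma psival (h ω : ℝ) (σ : ℤ → ℝ) (V : ℤ → ℤ → ℂ) (hω : (ω:ℂ) ≠ 0) (r j : ℤ) :
    PsiAux h ω σ V r j
      = (V r j - V (r - 1) (j - 1)) / ((2*Complex.I*(ω:ℂ) - ((σ (j-1) : ℝ):ℂ)) * (h:ℂ)) := by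
  rw [PsiAux, Dval _ _ _ hω]

lemma key (h : ℝ) (hh : 0 < h) (ω : ℝ) (hω : ω ≠ 0) (σ : ℤ → ℝ)
    (hσneg : ∀ j : ℤ, j < 0 → σ j = 0)
    (V : ℤ → ℤ → ℂ) (hholo : DiscreteHolo h ω σ V) (m n : ℤ) :
    V (m-1) (n+1) - V m n = -((σ n : ℝ):ℂ) * (h:ℂ) * PsiAux h ω σ V m (n+1) := by
  have hωc : (ω:ℂ) ≠ 0 := by exact_mod_cast hω
  have hhc : (h:ℂ) ≠ 0 := by exact_mod_cast hh.ne'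
  have hcr := hholo (m-1) n
  rw [zd1 h ω σ hσneg (m-1) n, zd2 h ω σ hσneg (m-1) n] at hcr
  rw [show m - 1 + 1 = m by ring] at hcr
  rw [psival h ω σ V hωc, show n + 1 - 1 = n by ring]
  rw [← mul_div_assoc, eq_div_iff (Dne h ω (σ n) hh.ne' hω)]
  field_simp at hcr
  linear_combination (-Complex.I * (h:ℂ)) * hcr +
    ((σ n : ℂ) * (h:ℂ) * ((V m (n+1) - V (m-1) n) - (V (m-1) (n+1) - V m n))) * Complex.I_mul_I

lemma tele (h ω : ℝ) (σ : ℤ → ℝ) (V : ℤ → ℤ → ℂ)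
    (hkey : ∀ m n : ℤ, V (m-1) (n+1) - V m n
      = -((σ n : ℝ):ℂ) * (h:ℂ) * PsiAux h ω σ V m (n+1))
    (m k : ℤ) : ∀ nn : ℕ, V (m - nn) (k + nn) - V m k
      = ∑ l ∈ Finset.range nn,
          (-((σ (k + l) : ℝ):ℂ) * (h:ℂ) * PsiAux h ω σ V (m - l) (k + l + 1)) := by
  intro nn
  induction nn with
  | zero => simp
  | succ n ih =>
    rw [Finset.sum_range_succ, ← ih]
    have hk := hkey (m - n) (k + n)
    push_cast
    rw [show m - ((n:ℤ) + 1) = m - n - 1 by ring]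
    linear_combination (norm := ring_nf) hk


lemma final_alg (ω h s sj X Y W T1 T2 : ℂ) (hh : h ≠ 0)
    (hd : 2*Complex.I*ω - s ≠ 0) :
    Complex.I * ω * ((X - Y)/((2*Complex.I*ω - s)*h)) =
      (X - Y - h*sj*W - h*T1 + h*T2)/(2*h)
      + (s*((X - Y)/((2*Complex.I*ω - s)*h)) + sj*W)/2 + (T1 - T2)/2 := by
  have hu : ((2*Complex.I*ω - s)*h) * ((2*Complex.I*ω - s)*h)⁻¹ = 1 :=
    mul_inv_cancel₀ (mul_ne_zero hd hh)
  have hv : h * h⁻¹ = 1 := mul_inv_cancel₀ hh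
  linear_combination ((X - Y) * h⁻¹ / 2) * hu +
    ((sj*W + T1 - T2)/2 - (X - Y)*(2*Complex.I*ω - s)*((2*Complex.I*ω - s)*h)⁻¹/2) * hv

/-- the recursion for the auxiliary variables `Ψ̂^{(r)}_j`,
where `ṽ_j = V_{0,j}`. -/
theorem stmt15
    (p : ℕ) (hp : 1 ≤ p) (h : ℝ) (hh : 0 < h)
    (a : ℤ → ℝ) (hsym : ∀ r : ℤ, a (-r) = a r)
    (ω : ℝ) (hω : ω ≠ 0)
    (σ : ℤ → ℝ) (hσ : ∀ j : ℤ, 0 ≤ σ j) (hσneg : ∀ j : ℤ, j < 0 → σ j = 0)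
    (V : ℤ → ℤ → ℂ) (hholo : DiscreteHolo h ω σ V)
    (heq : ∀ j k : ℤ, (∑ r ∈ Finset.Icc (-(p : ℤ)) (p : ℤ), (a r : ℂ) * V (j + r) k) +
        (ω : ℂ) ^ 2 * V j k = 0)
    (j : ℤ) (r : ℤ) (hr1 : 1 ≤ r) (hrp : r ≤ (p : ℤ)) :
    Complex.I * (ω : ℂ) * PsiAux h ω σ V r j =
      (V 0 (j + r) - V 0 (j + r - 2)) / (2 * (h : ℂ)) +
      ((σ (j - 1) : ℂ) * PsiAux h ω σ V r j + (σ j : ℂ) * PsiAux h ω σ V r (j + 1)) / 2 +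
      ∑ l ∈ Finset.Icc (1 : ℤ) (r - 1),
        ((σ (j + l) : ℂ) * PsiAux h ω σ V (r - l) (j + l + 1) -
          (σ (j + l - 2) : ℂ) * PsiAux h ω σ V (r - l) (j + l - 1)) / 2 := by
  have hωc : (ω:ℂ) ≠ 0 := by exact_mod_cast hω
  have hhc : (h:ℂ) ≠ 0 := by exact_mod_cast hh.ne'
  have hkey := key h hh ω hω σ hσneg V hholo
  set N := r.toNat with hN
  have hNr : ((N:ℕ) : ℤ) = r := Int.toNat_of_nonneg (by omega)
  -- abbreviations for the two range sums
  set S1 : ℂ := ∑ i ∈ Finset.range (N-1),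
      ((σ (j + 1 + i) : ℝ):ℂ) * PsiAux h ω σ V (r - 1 - i) (j + 2 + i) with hS1def
  set S2 : ℂ := ∑ i ∈ Finset.range (N-1),
      ((σ (j - 1 + i) : ℝ):ℂ) * PsiAux h ω σ V (r - 1 - i) (j + i) with hS2def
  -- first telescoping identity
  have hA := tele h ω σ V hkey (r-1) (j+1) (N-1)
  rw [show ((N-1:ℕ):ℤ) = r - 1 by omega] at hA
  rw [show r - 1 - (r-1) = 0 by ring, show j + 1 + (r - 1) = j + r by ring] at hA
  have hA' : V 0 (j + r) - V (r-1) (j+1) = -(h:ℂ) * S1 := by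
    rw [hA, hS1def, Finset.mul_sum]
    refine Finset.sum_congr rfl fun i _ => ?_
    rw [show j + 1 + (i:ℤ) + 1 = j + 2 + i by ring]
    ring
  have hB := hkey r j
  have h1' : V 0 (j + r) - V r j
      = -(h:ℂ) * ((σ j : ℝ):ℂ) * PsiAux h ω σ V r (j + 1) - (h:ℂ) * S1 := by
    linear_combination hA' + hB
  -- second telescoping identity
  have hC := tele h ω σ V hkey (r-1) (j-1) (N-1)
  rw [show ((N-1:ℕ):ℤ) = r - 1 by omega] at hC
  rw [show r - 1 - (r-1) = 0 by ring, show j - 1 + (r - 1) = j + r - 2 by ring] at hC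
  have h2' : V 0 (j + r - 2) - V (r-1) (j-1) = -(h:ℂ) * S2 := by
    rw [hC, hS2def, Finset.mul_sum]
    refine Finset.sum_congr rfl fun i _ => ?_
    rw [show j - 1 + (i:ℤ) + 1 = j + i by ring]
    ring
  -- converting the Icc sum
  have hinj : Function.Injective (fun n : ℕ => 1 + (n:ℤ)) := by
    intro a b hab; simpa using hab
  have hmap : Finset.Icc (1:ℤ) (r-1)
      = Finset.map ⟨fun n : ℕ => 1 + (n:ℤ), hinj⟩ (Finset.range (N-1)) := by
    ext x
    simp only [Finset.mem_Icc, Finset.mem_map, Finset.mem_range, Function.Embedding.coeFn_mk]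
    constructor
    · rintro ⟨hx1, hx2⟩
      exact ⟨(x-1).toNat, by omega, by omega⟩
    · rintro ⟨n, hn, rfl⟩
      omega
  have hsum : (∑ l ∈ Finset.Icc (1 : ℤ) (r - 1),
        ((σ (j + l) : ℂ) * PsiAux h ω σ V (r - l) (j + l + 1) -
          (σ (j + l - 2) : ℂ) * PsiAux h ω σ V (r - l) (j + l - 1)) / 2)
      = (S1 - S2)/2 := by
    rw [hmap, Finset.sum_map]
    simp only [Function.Embedding.coeFn_mk]
    rw [hS1def, hS2def, ← Finset.sum_sub_distrib, Finset.sum_div]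
    refine Finset.sum_congr rfl fun i _ => ?_
    rw [show j + (1 + (i:ℤ)) = j + 1 + i by ring, show r - (1 + (i:ℤ)) = r - 1 - i by ring,
      show j + 1 + (i:ℤ) + 1 = j + 2 + i by ring, show j + 1 + (i:ℤ) - 2 = j - 1 + i by ring,
      show j + 1 + (i:ℤ) - 1 = j + i by ring]
  rw [hsum]
  have E : V 0 (j + r) - V 0 (j + r - 2)
      = (V r j - V (r-1) (j-1)) - (h:ℂ)*((σ j : ℝ):ℂ)*PsiAux h ω σ V r (j+1)
        - (h:ℂ)*S1 + (h:ℂ)*S2 := by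
    linear_combination h1' - h2'
  rw [E, psival h ω σ V hωc r j]
  have hne2 : (2*Complex.I*(ω:ℂ) - ((σ (j-1) : ℝ):ℂ)) ≠ 0 := by
    intro h0
    have := congrArg Complex.im h0
    simp at this
    exact hω (by linarith)
  linear_combination final_alg (ω:ℂ) (h:ℂ) ((σ (j-1) : ℝ):ℂ) ((σ j : ℝ):ℂ)
    (V r j) (V (r-1) (j-1)) (PsiAux h ω σ V r (j+1)) S1 S2 hhc hne2
end
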